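/- Let (P_n)_{n≥1} and P be Borel probability measures on the space C[0,1] of continuous real-valued functions on [0,1], equipped with the supremum metric. Assume that for every n, P_n-almost every f ∈ C[0,1] is convex on [0,1]. If all the finite-dimensional distributions of P_n converge weakly to those of P — that is, for every k ≥ 1 and all points t_1,…,t_k ∈ [0,1], the pushforward of P_n under the map f ↦ (f(t_1),…,f(t_k)) converges weakly (as probability measures on ℝ^k) to the corresponding pushforward of P — then P_n converges weakly to P as probability measures on C[0,1]. -/

import Mathlib

open MeasureTheory Filter

/-- Equip `C([0,1], ℝ)` (with the supremum metric) with its Borel σ-algebra. -/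
noncomputable instance : MeasurableSpace C(Set.Icc (0 : ℝ) 1, ℝ) := borel _

instance : BorelSpace C(Set.Icc (0 : ℝ) 1, ℝ) := ⟨rfl⟩

namespace ConvexWeak

open Topology

noncomputable section

abbrev I01 : Set ℝ := Set.Icc (0:ℝ) 1

def node (k : ℕ) (i : Fin (k+1)) : I01 :=
  ⟨(i:ℝ)/k, by
    constructor
    · positivity
    · rcases Nat.eq_zero_or_pos k with hk | hk
      · simp [hk]
      · rw [div_le_one (by exact_mod_cast hk)]
        exact_mod_cast Nat.le_of_lt_succ i.isLt⟩

/-- hat function at node `j` for grid of mesh `1/k`. -/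
def hat (k j : ℕ) (t : ℝ) : ℝ := max 0 (1 - |k*t - j|)

lemma hat_continuous (k j : ℕ) : Continuous (hat k j) := by
  unfold hat; fun_prop

lemma hat_nonneg (k j : ℕ) (t : ℝ) : 0 ≤ hat k j t := le_max_left _ _

def interpFun (k : ℕ) (x : Fin (k+1) → ℝ) (t : ℝ) : ℝ :=
  ∑ j : Fin (k+1), hat k j t * x j

/-- Local representation of the interpolation. -/
lemma interp_rep (k : ℕ) (hk : 1 ≤ k) (t : I01) :
    ∃ i : ℕ, ∃ hi : i < k,
      (i:ℝ) ≤ k * t ∧ (k:ℝ) * t ≤ i + 1 ∧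
      ∀ x : Fin (k+1) → ℝ,
        interpFun k x t = (1 - ((k:ℝ)*t - i)) * x ⟨i, by omega⟩ + ((k:ℝ)*t - i) * x ⟨i+1, by omega⟩ := by
  obtain ⟨t, ht0, ht1⟩ := t
  have hkpos : (0:ℝ) < k := by exact_mod_cast hk
  set i : ℕ := min (⌊(k:ℝ)*t⌋₊) (k-1) with hidef
  have hkt0 : 0 ≤ (k:ℝ)*t := by positivity
  have hikt : (i:ℝ) ≤ k * t := by
    rcases le_or_gt (⌊(k:ℝ)*t⌋₊) (k-1) with h | h
    · rw [hidef, min_eq_left h]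
      exact Nat.floor_le hkt0
    · rw [hidef, min_eq_right h.le]
      have h2 : ((k-1:ℕ):ℝ) ≤ (⌊(k:ℝ)*t⌋₊ : ℝ) := by exact_mod_cast h.le
      exact h2.trans (Nat.floor_le hkt0)
  have hilt : i < k := by
    have : i ≤ k - 1 := min_le_right _ _
    omega
  have hkti : (k:ℝ) * t ≤ i + 1 := by
    rcases le_or_gt (⌊(k:ℝ)*t⌋₊) (k-1) with h | h
    · rw [hidef, min_eq_left h]
      exact le_of_lt (Nat.lt_floor_add_one _)
    · rw [hidef, min_eq_right h.le]
      have : ((k-1:ℕ):ℝ) + 1 = (k:ℝ) := by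
        have : k - 1 + 1 = k := by omega
        exact_mod_cast congrArg (Nat.cast : ℕ → ℝ) this
      rw [this]
      nlinarith
  refine ⟨i, hilt, hikt, hkti, fun x => ?_⟩
  have hvanish : ∀ j : Fin (k+1), j.1 ≠ i → j.1 ≠ i+1 → hat k j t * x j = 0 := by
    intro j hj1 hj2
    have : (1:ℝ) ≤ |(k:ℝ)*t - j| := by
      rcases lt_or_gt_of_ne hj1 with h | h
      · -- j < i
        have hji : (j.1:ℝ) ≤ (i:ℝ) - 1 := by
          have : j.1 + 1 ≤ i := h
          have := (Nat.cast_le (α := ℝ)).mpr this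
          push_cast at this ⊢; linarith
        rw [abs_of_nonneg (by linarith)]
        linarith
      · -- j > i, j ≠ i+1 so j ≥ i+2
        have hji : (i:ℝ) + 2 ≤ (j.1:ℝ) := by
          have : i + 2 ≤ j.1 := by omega
          exact_mod_cast this
        rw [abs_of_nonpos (by linarith)]
        linarith
    unfold hat
    rw [max_eq_left (by linarith), zero_mul]
  have hne : (⟨i, by omega⟩ : Fin (k+1)) ≠ ⟨i+1, by omega⟩ := by
    simp [Fin.ext_iff]
  have hsum : interpFun k x t =
      ∑ j ∈ ({⟨i, by omega⟩, ⟨i+1, by omega⟩} : Finset (Fin (k+1))), hat k j t * x j := by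
    rw [interpFun]
    refine (Finset.sum_subset (Finset.subset_univ _) ?_).symm
    intro j _ hj
    simp only [Finset.mem_insert, Finset.mem_singleton] at hj
    push_neg at hj
    exact hvanish j (fun h => hj.1 (Fin.ext h)) (fun h => hj.2 (Fin.ext h))
  rw [hsum, Finset.sum_pair hne]
  have h1 : hat k i t = 1 - ((k:ℝ)*t - i) := by
    unfold hat
    rw [abs_of_nonneg (by linarith), max_eq_right (by linarith)]
  have h2 : hat k (i+1) t = (k:ℝ)*t - i := by
    unfold hat
    have : |(k:ℝ)*t - (i+1:ℕ)| = (i:ℝ) + 1 - k*t := by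
      rw [abs_of_nonpos (by push_cast; linarith)]
      push_cast; ring
    rw [this, max_eq_right (by linarith)]
    push_cast; ring
  simp only [h1, h2]

lemma node_coe (k : ℕ) (i : Fin (k+1)) : ((node k i : I01) : ℝ) = (i:ℝ)/k := rfl

lemma node_mem (k : ℕ) (hk : 1 ≤ k) (j : ℕ) (hj : j ≤ k) : (j:ℝ)/k ∈ Set.Icc (0:ℝ) 1 := by
  have hkpos : (0:ℝ) < k := by exact_mod_cast hk
  constructor
  · positivity
  · rw [div_le_one hkpos]; exact_mod_cast hj

lemma IccExtend_node (f : C(I01, ℝ)) (k : ℕ) (i : Fin (k+1)) :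
    Set.IccExtend (zero_le_one : (0:ℝ) ≤ 1) f ((i:ℝ)/k) = f (node k i) := by
  rw [show ((i:ℝ)/k) = ((node k i : I01) : ℝ) from rfl, Set.IccExtend_val]

/-- Chord bound using the left neighbouring node (for convex `g`). -/
lemma chord_sub_le_left (g : ℝ → ℝ) (hg : ConvexOn ℝ (Set.Icc (0:ℝ) 1) g) {h a t : ℝ}
    (hh : 0 < h) (ha : 0 ≤ a - h) (hb : a + h ≤ 1) (hta : a ≤ t) (htb : t ≤ a + h) :
    g a + ((t - a)/h) * (g (a+h) - g a) - g t ≤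
      ((t - a)/h) * (g (a+h) - 2 * g a + g (a-h)) := by
  rcases eq_or_lt_of_le hta with rfl | hta'
  · simp
  · set θ : ℝ := (t - a)/h with hθ
    have hθh : θ * h = t - a := by rw [hθ]; field_simp
    have hmem1 : a - h ∈ Set.Icc (0:ℝ) 1 := ⟨ha, by linarith⟩
    have hmem2 : t ∈ Set.Icc (0:ℝ) 1 := ⟨by linarith, by linarith⟩
    have hslope := hg.slope_mono_adjacent hmem1 hmem2
      (show a - h < a by linarith) hta'
    rw [div_le_div_iff₀ (by linarith) (by linarith)] at hslope
    have h3 : (g a - g (a-h)) * θ ≤ g t - g a := by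
      have hexp : a - (a - h) = h := by ring
      rw [hexp, ← hθh] at hslope
      have h4 : ((g a - g (a-h)) * θ) * h ≤ (g t - g a) * h := by linarith [hslope]
      exact le_of_mul_le_mul_right h4 hh
    linarith [h3]

/-- Chord bound using the right neighbouring node (for convex `g`). -/
lemma chord_sub_le_right (g : ℝ → ℝ) (hg : ConvexOn ℝ (Set.Icc (0:ℝ) 1) g) {h a t : ℝ}
    (hh : 0 < h) (ha : 0 ≤ a) (hb : a + 2*h ≤ 1) (hta : a ≤ t) (htb : t ≤ a + h) :
    g a + ((t - a)/h) * (g (a+h) - g a) - g t ≤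
      (1 - (t - a)/h) * (g (a+2*h) - 2 * g (a+h) + g a) := by
  rcases eq_or_lt_of_le htb with rfl | htb'
  · have : (a + h - a)/h = 1 := by field_simp; ring
    rw [this]; simp
  · set θ : ℝ := (t - a)/h with hθ
    have hθh : θ * h = t - a := by rw [hθ]; field_simp
    have hmem1 : t ∈ Set.Icc (0:ℝ) 1 := ⟨by linarith, by linarith⟩
    have hmem3 : a + 2*h ∈ Set.Icc (0:ℝ) 1 := ⟨by linarith, hb⟩
    have hslope := hg.slope_mono_adjacent hmem1 hmem3 htb'
      (show a + h < a + 2*h by linarith)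
    rw [div_le_div_iff₀ (by linarith) (by linarith)] at hslope
    have hexp : a + 2*h - (a + h) = h := by ring
    rw [hexp] at hslope
    have h3 : g (a+h) - g t ≤ (g (a+2*h) - g (a+h)) * (1 - θ) := by
      have heq2 : a + h - t = (1 - θ) * h := by rw [hθ]; field_simp; ring
      rw [heq2] at hslope
      have h4 : (g (a+h) - g t) * h ≤ ((g (a+2*h) - g (a+h)) * (1 - θ)) * h := by
        linarith [hslope]
      exact le_of_mul_le_mul_right h4 hh
    linarith [h3]

/-- Error bound for the interpolation of a convex function in terms of second differences. -/
lemma convex_err (k : ℕ) (hk : 2 ≤ k) (f : C(I01,ℝ))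
    (hf : ConvexOn ℝ (Set.Icc (0:ℝ) 1) (Set.IccExtend (zero_le_one : (0:ℝ) ≤ 1) f)) (c : ℝ)
    (hc : ∀ j : ℕ, (hj : j + 2 ≤ k) →
      |f (node k ⟨j+2, by omega⟩) - 2 * f (node k ⟨j+1, by omega⟩) + f (node k ⟨j, by omega⟩)| ≤ c)
    (t : I01) : |f t - interpFun k (fun i => f (node k i)) t| ≤ c := by
  have hk1 : 1 ≤ k := by omega
  have hkpos : (0:ℝ) < k := by exact_mod_cast hk1
  set g : ℝ → ℝ := Set.IccExtend (zero_le_one : (0:ℝ) ≤ 1) f with hg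
  have hgt : g ↑t = f t := by rw [hg, Set.IccExtend_val]
  obtain ⟨i, hi, h1, h2, hrep⟩ := interp_rep k hk1 t
  set x : Fin (k+1) → ℝ := fun i => f (node k i) with hx
  rw [hrep x]
  set θ : ℝ := (k:ℝ)*t - i with hθ
  have hθ0 : 0 ≤ θ := by rw [hθ]; linarith
  have hθ1 : θ ≤ 1 := by rw [hθ]; linarith
  have hc0 : 0 ≤ c := le_trans (abs_nonneg _) (hc 0 (by omega))
  set a : ℝ := (i:ℝ)/k with ha
  set h : ℝ := 1/(k:ℝ) with hh
  have hhpos : 0 < h := by rw [hh]; positivity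
  have hta : a ≤ (t:ℝ) := by rw [ha]; rw [div_le_iff₀ hkpos]; linarith [h1]
  have htb : (t:ℝ) ≤ a + h := by
    rw [ha, hh, ← add_div, le_div_iff₀ hkpos]; linarith [h2]
  have hθeq : θ = ((t:ℝ) - a)/h := by
    rw [hθ, ha, hh]; field_simp
  have hah : a + h = ((i:ℝ)+1)/k := by rw [ha, hh]; field_simp
  have hga : g a = x ⟨i, by omega⟩ := by
    rw [hg, hx, ha]; exact IccExtend_node f k ⟨i, by omega⟩
  have hgb : g (a+h) = x ⟨i+1, by omega⟩ := by
    rw [hg, hx, hah]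
    have := IccExtend_node f k ⟨i+1, by omega⟩
    push_cast at this ⊢
    exact this
  have hb1 : a + h ≤ 1 := by
    rw [hah, div_le_one hkpos]; push_cast; exact_mod_cast Nat.succ_le_of_lt hi
  -- upper bound: f t ≤ chord
  have hupper : f t ≤ (1-θ) * x ⟨i, by omega⟩ + θ * x ⟨i+1, by omega⟩ := by
    have hmema : a ∈ Set.Icc (0:ℝ) 1 := by rw [ha]; exact node_mem k hk1 i (by omega)
    have hmemb : a + h ∈ Set.Icc (0:ℝ) 1 := ⟨by positivity, hb1⟩
    have hcomb := hf.2 hmema hmemb (by linarith : (0:ℝ) ≤ 1-θ) hθ0 (by ring)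
    simp only [smul_eq_mul] at hcomb
    rw [hga, hgb] at hcomb
    have ht' : (1-θ) * a + θ * (a + h) = (t:ℝ) := by
      rw [hθeq]; field_simp; ring
    rw [ht'] at hcomb
    rw [← hgt]; exact hcomb
  -- lower bound: chord - f t ≤ c
  have hlower : (1-θ) * x ⟨i, by omega⟩ + θ * x ⟨i+1, by omega⟩ - f t ≤ c := by
    have hchord : (1-θ) * x ⟨i, by omega⟩ + θ * x ⟨i+1, by omega⟩
        = g a + (((t:ℝ) - a)/h) * (g (a+h) - g a) := by
      rw [hga, hgb, ← hθeq]; ring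
    rcases Nat.eq_zero_or_pos i with hi0 | hipos
    · -- first interval: use right-neighbour bound
      have hsd : |x ⟨2, by omega⟩ - 2 * x ⟨1, by omega⟩ + x ⟨0, by omega⟩| ≤ c := hc 0 (by omega)
      have hb2 : a + 2*h ≤ 1 := by
        have h2k : a + 2*h = (2:ℝ)/k := by rw [ha, hh, hi0]; push_cast; ring
        rw [h2k, div_le_one hkpos]
        exact_mod_cast hk
      have key := chord_sub_le_right g hf hhpos (by rw [ha]; positivity) hb2 hta htb
      have hgq : g (a+2*h) = x ⟨2, by omega⟩ := by
        rw [hg, hx]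
        have h2k : a + 2*h = ((2:ℕ):ℝ)/k := by rw [ha, hh, hi0]; push_cast; ring
        rw [h2k]
        exact IccExtend_node f k ⟨2, by omega⟩
      have hia : x ⟨i, by omega⟩ = x ⟨0, by omega⟩ := by
        rw [show (⟨i, by omega⟩ : Fin (k+1)) = ⟨0, by omega⟩ from Fin.ext (by simp [hi0])]
      have hib : x ⟨i+1, by omega⟩ = x ⟨1, by omega⟩ := by
        rw [show (⟨i+1, by omega⟩ : Fin (k+1)) = ⟨1, by omega⟩ from Fin.ext (by simp [hi0])]
      rw [hga, hgb, hgq, ← hθeq, hia, hib] at key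
      have habs : x ⟨2, by omega⟩ - 2 * x ⟨1, by omega⟩ + x ⟨0, by omega⟩ ≤ c :=
        le_trans (le_abs_self _) hsd
      have habs2 : -(c) ≤ x ⟨2, by omega⟩ - 2 * x ⟨1, by omega⟩ + x ⟨0, by omega⟩ :=
        le_trans (by linarith [hsd]) (neg_abs_le _)
      rw [hia, hib, ← hgt]
      linarith [key, mul_nonneg (by linarith : (0:ℝ) ≤ 1-θ)
        (by linarith : (0:ℝ) ≤ c - (x ⟨2, by omega⟩ - 2 * x ⟨1, by omega⟩ + x ⟨0, by omega⟩)),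
        mul_nonneg hθ0 hc0]
    · -- interior interval: use left-neighbour bound
      obtain ⟨j, rfl⟩ : ∃ j, i = j + 1 := ⟨i - 1, by omega⟩
      have hsd : |x ⟨j+2, by omega⟩ - 2 * x ⟨j+1, by omega⟩ + x ⟨j, by omega⟩| ≤ c :=
        hc j (by omega)
      have hamh : a - h = ((j:ℕ):ℝ)/k := by rw [ha, hh]; push_cast; field_simp; try ring
      have ham : 0 ≤ a - h := by rw [hamh]; positivity
      have key := chord_sub_le_left g hf hhpos ham hb1 hta htb
      have hgp : g (a-h) = x ⟨j, by omega⟩ := by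
        rw [hg, hx, hamh]; exact IccExtend_node f k ⟨j, by omega⟩
      have hib : (⟨j+1+1, by omega⟩ : Fin (k+1)) = (⟨j+2, by omega⟩ : Fin (k+1)) := rfl
      rw [hga, hgb, hgp, ← hθeq, hib] at key
      have habs : x ⟨j+2, by omega⟩ - 2 * x ⟨j+1, by omega⟩ + x ⟨j, by omega⟩ ≤ c :=
        le_trans (le_abs_self _) hsd
      have habs2 : -(c) ≤ x ⟨j+2, by omega⟩ - 2 * x ⟨j+1, by omega⟩ + x ⟨j, by omega⟩ :=
        le_trans (by linarith [hsd]) (neg_abs_le _)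
      rw [hib, ← hgt]
      linarith [key, mul_nonneg hθ0
        (by linarith : (0:ℝ) ≤ c - (x ⟨j+2, by omega⟩ - 2 * x ⟨j+1, by omega⟩ + x ⟨j, by omega⟩)),
        mul_nonneg (by linarith : (0:ℝ) ≤ 1-θ) hc0]
  rw [abs_le]
  constructor <;> linarith

/-- Interpolation error for a merely continuous function. -/
lemma cont_err (k : ℕ) (hk : 1 ≤ k) (f : C(I01,ℝ)) (c : ℝ)
    (hc : ∀ u v : I01, |(u:ℝ) - (v:ℝ)| ≤ 1/k → |f u - f v| ≤ c) (t : I01) :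
    |f t - interpFun k (fun i => f (node k i)) t| ≤ c := by
  have hkpos : (0:ℝ) < k := by exact_mod_cast hk
  obtain ⟨i, hi, h1, h2, hrep⟩ := interp_rep k hk t
  rw [hrep]
  set θ : ℝ := (k:ℝ)*t - i with hθ
  have hθ0 : 0 ≤ θ := by rw [hθ]; linarith
  have hθ1 : θ ≤ 1 := by rw [hθ]; linarith
  have hd1 : |(t:ℝ) - ((node k ⟨i, by omega⟩ : I01):ℝ)| ≤ 1/k := by
    rw [node_coe, abs_le]
    constructor
    · have : (i:ℝ)/k ≤ t := by rw [div_le_iff₀ hkpos]; linarith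
      have h1k : (0:ℝ) ≤ 1/k := by positivity
      simp only [Fin.val_mk] at this ⊢
      linarith
    · rw [sub_le_iff_le_add]
      simp only [Fin.val_mk]
      rw [← add_div, le_div_iff₀ hkpos]
      linarith
  have hd2 : |(t:ℝ) - ((node k ⟨i+1, by omega⟩ : I01):ℝ)| ≤ 1/k := by
    rw [node_coe, abs_le]
    constructor
    · simp only [Fin.val_mk]
      push_cast
      have hik : ((i:ℝ)+1)/k ≤ 1/k + t := by
        rw [div_le_iff₀ hkpos]
        have h1k : (1/(k:ℝ))*k = 1 := by field_simp
        nlinarith [h1]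
      linarith
    · simp only [Fin.val_mk]
      push_cast
      rw [sub_le_iff_le_add]
      have : (t:ℝ) ≤ ((i:ℝ)+1)/k := by rw [le_div_iff₀ hkpos]; linarith
      have h1k : (0:ℝ) ≤ 1/k := by positivity
      linarith
  have e1 := hc t (node k ⟨i, by omega⟩) hd1
  have e2 := hc t (node k ⟨i+1, by omega⟩) hd2
  have p1 := mul_le_mul_of_nonneg_left (abs_le.mp e1).2 (by linarith : (0:ℝ) ≤ 1-θ)
  have p2 := mul_le_mul_of_nonneg_left (abs_le.mp e1).1 (by linarith : (0:ℝ) ≤ 1-θ)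
  have p3 := mul_le_mul_of_nonneg_left (abs_le.mp e2).2 hθ0
  have p4 := mul_le_mul_of_nonneg_left (abs_le.mp e2).1 hθ0
  rw [abs_le]
  constructor <;> nlinarith [p1, p2, p3, p4]

/-- The interpolation, as a continuous map of the node values. -/
def interpCM (k : ℕ) : C((Fin (k+1) → ℝ), C(I01, ℝ)) :=
  ContinuousMap.curry ⟨fun p => interpFun k p.1 p.2, by
    unfold interpFun
    apply continuous_finset_sum
    intro j _
    exact ((hat_continuous k j).comp (continuous_subtype_val.comp continuous_snd)).mul
      ((continuous_apply j).comp continuous_fst)⟩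

lemma interpCM_apply (k : ℕ) (x : Fin (k+1) → ℝ) (t : I01) :
    interpCM k x t = interpFun k x t := rfl

/-- Evaluation at the nodes, as a continuous map. -/
def evCM (k : ℕ) : C(C(I01,ℝ), (Fin (k+1) → ℝ)) :=
  ⟨fun f i => f (node k i),
    continuous_pi (fun i => continuous_eval_const (node k i))⟩

lemma evCM_apply (k : ℕ) (f : C(I01,ℝ)) : evCM k f = fun i => f (node k i) := rfl

/-- Continuous cutoff: `0` on `(-∞, δ/2]`, `1` on `[δ, ∞)`. -/
def cut (δ s : ℝ) : ℝ := min 1 (max 0 (2*s/δ - 1))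

lemma cut_nonneg (δ s : ℝ) (hδ : 0 < δ) : 0 ≤ cut δ s := by
  unfold cut
  rcases le_total (1:ℝ) (max 0 (2*s/δ - 1)) with h | h
  · rw [min_eq_left h]; norm_num
  · rw [min_eq_right h]; exact le_max_left _ _

lemma cut_le_one (δ s : ℝ) : cut δ s ≤ 1 := min_le_left _ _

lemma cut_continuous (δ : ℝ) : Continuous (cut δ) := by
  unfold cut; fun_prop

lemma cut_eq_one {δ s : ℝ} (hδ : 0 < δ) (h : δ ≤ s) : cut δ s = 1 := by
  unfold cut
  have : (1:ℝ) ≤ 2*s/δ - 1 := by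
    rw [le_sub_iff_add_le, le_div_iff₀ hδ]
    linarith
  rw [max_eq_right (by linarith), min_eq_left this]

lemma cut_eq_zero {δ s : ℝ} (hδ : 0 < δ) (h : s ≤ δ/2) : cut δ s = 0 := by
  unfold cut
  have : 2*s/δ - 1 ≤ 0 := by
    rw [sub_nonpos, div_le_one hδ]
    linarith
  rw [max_eq_left this, min_eq_right (by norm_num)]

/-- Second difference at node `j`. -/
def secd (k : ℕ) (x : Fin (k+1) → ℝ) (j : Fin (k-1)) : ℝ :=
  x ⟨j.1+2, by omega⟩ - 2 * x ⟨j.1+1, by omega⟩ + x ⟨j.1, by omega⟩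

lemma secd_continuous (k : ℕ) (j : Fin (k-1)) : Continuous (fun x => secd k x j) := by
  unfold secd
  fun_prop

/-- The capped sum of cutoffs of second differences. -/
def sumcut (k : ℕ) (δ : ℝ) (x : Fin (k+1) → ℝ) : ℝ :=
  min 1 (∑ j : Fin (k-1), cut δ |secd k x j|)

lemma sumcut_nonneg (k : ℕ) (δ : ℝ) (hδ : 0 < δ) (x : Fin (k+1) → ℝ) : 0 ≤ sumcut k δ x := by
  unfold sumcut
  have hs : 0 ≤ ∑ j : Fin (k-1), cut δ |secd k x j| :=
    Finset.sum_nonneg (fun j _ => cut_nonneg δ _ hδ)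
  exact le_min (by norm_num) hs

lemma sumcut_le_one (k : ℕ) (δ : ℝ) (x : Fin (k+1) → ℝ) : sumcut k δ x ≤ 1 := min_le_left _ _

lemma sumcut_continuous (k : ℕ) (δ : ℝ) : Continuous (sumcut k δ) := by
  unfold sumcut
  refine continuous_const.min ?_
  apply continuous_finset_sum
  intro j _
  exact (cut_continuous δ).comp (continuous_abs.comp (secd_continuous k j))

/-- If some second difference exceeds `δ`, the capped sum equals 1. -/
lemma sumcut_eq_one {k : ℕ} {δ : ℝ} (hδ : 0 < δ) {x : Fin (k+1) → ℝ}
    (h : ∃ j : Fin (k-1), δ ≤ |secd k x j|) : sumcut k δ x = 1 := by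
  obtain ⟨j, hj⟩ := h
  unfold sumcut
  rw [min_eq_left]
  calc (1:ℝ) = cut δ |secd k x j| := (cut_eq_one hδ hj).symm
    _ ≤ ∑ j' : Fin (k-1), cut δ |secd k x j'| :=
        Finset.single_le_sum (f := fun j' => cut δ |secd k x j'|)
          (fun j' _ => cut_nonneg δ _ hδ) (Finset.mem_univ j)

/-- The capped cutoff sum, as a bounded continuous function. -/
def cutBCF (k : ℕ) (δ : ℝ) (hδ : 0 < δ) : BoundedContinuousFunction (Fin (k+1) → ℝ) ℝ :=
  BoundedContinuousFunction.mkOfBound ⟨sumcut k δ, sumcut_continuous k δ⟩ 1 (by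
    intro x y
    rw [Real.dist_eq, abs_le]
    have h1 := sumcut_nonneg k δ hδ x
    have h2 := sumcut_nonneg k δ hδ y
    have h3 := sumcut_le_one k δ x
    have h4 := sumcut_le_one k δ y
    constructor <;> simp only [ContinuousMap.coe_mk] <;> linarith)

lemma cutBCF_apply (k : ℕ) (δ : ℝ) (hδ : 0 < δ) (x : Fin (k+1) → ℝ) :
    cutBCF k δ hδ x = sumcut k δ x := rfl

/-- Key pointwise bound (used under `P n`, where `f` is a.s. convex). -/
lemma key_pointwise (k : ℕ) (hk : 2 ≤ k) (δ ε : ℝ) (hδ : 0 < δ) (hε : 0 ≤ ε)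
    (φ : BoundedContinuousFunction C(I01,ℝ) ℝ)
    (hφ : ∀ g1 g2 : C(I01,ℝ), dist g1 g2 ≤ δ → |φ g1 - φ g2| ≤ ε)
    (f : C(I01,ℝ))
    (hf : ConvexOn ℝ (Set.Icc (0:ℝ) 1) (Set.IccExtend (zero_le_one : (0:ℝ) ≤ 1) ⇑f)) :
    |φ f - φ (interpCM k (evCM k f))| ≤ ε + 2*‖φ‖ * sumcut k δ (evCM k f) := by
  have hsnn : 0 ≤ sumcut k δ (evCM k f) := sumcut_nonneg k δ hδ _
  have hφn : 0 ≤ ‖φ‖ := norm_nonneg _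
  by_cases hd : dist f (interpCM k (evCM k f)) ≤ δ
  · have h1 := hφ f _ hd
    nlinarith [mul_nonneg (mul_nonneg (by norm_num : (0:ℝ) ≤ 2) hφn) hsnn]
  · push_neg at hd
    have hone : sumcut k δ (evCM k f) = 1 := by
      apply sumcut_eq_one hδ
      by_contra hno
      push_neg at hno
      apply absurd ?_ (not_le.mpr hd)
      rw [ContinuousMap.dist_le hδ.le]
      intro t
      rw [Real.dist_eq]
      have herr := convex_err k hk f hf δ ?hc t
      · exact herr
      case hc =>
        intro j hj
        have hj' := hno ⟨j, by omega⟩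
        exact le_of_lt hj'
    rw [hone]
    have b1 : |φ f| ≤ ‖φ‖ := by
      have := φ.norm_coe_le_norm f; rwa [Real.norm_eq_abs] at this
    have b2 : |φ (interpCM k (evCM k f))| ≤ ‖φ‖ := by
      have := φ.norm_coe_le_norm (interpCM k (evCM k f)); rwa [Real.norm_eq_abs] at this
    rw [abs_le]
    constructor <;> [skip; skip] <;> nlinarith [abs_le.mp b1, abs_le.mp b2]

/-- Modulus-of-continuity supply: for large `k`, values at points within `1/k` differ little. -/
lemma unif_small (f : C(I01,ℝ)) (c : ℝ) (hc : 0 < c) :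
    ∃ K : ℕ, ∀ k : ℕ, K ≤ k → ∀ u v : I01, |(u:ℝ) - (v:ℝ)| ≤ 1/k → |f u - f v| ≤ c := by
  have huc : UniformContinuous ⇑f := CompactSpace.uniformContinuous_of_continuous f.continuous
  rw [Metric.uniformContinuous_iff] at huc
  obtain ⟨δ, hδ, hδ'⟩ := huc c hc
  obtain ⟨K, hK⟩ := exists_nat_gt (1/δ)
  refine ⟨K+1, fun k hk u v huv => ?_⟩
  have hkpos : (0:ℝ) < k := by
    have : 1 ≤ k := by omega
    exact_mod_cast this
  have hkK : ((K:ℝ)+1) ≤ k := by exact_mod_cast hk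
  have h1k : 1/(k:ℝ) < δ := by
    rw [div_lt_iff₀ hkpos]
    rw [div_lt_iff₀ hδ] at hK
    nlinarith [hδ]
  have hdist : dist u v < δ := by
    rw [Subtype.dist_eq, Real.dist_eq]; linarith [huv]
  have := hδ' hdist
  rw [Real.dist_eq] at this
  linarith

lemma node_dist (k : ℕ) (hk : 1 ≤ k) (a b : Fin (k+1)) (h : a.1 = b.1 + 1) :
    |((node k a : I01) : ℝ) - ((node k b : I01) : ℝ)| ≤ 1/k := by
  have hkpos : (0:ℝ) < k := by exact_mod_cast hk
  rw [node_coe, node_coe, div_sub_div_same, h]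
  push_cast
  rw [show ((b.1:ℝ) + 1 - b.1) = 1 by ring, abs_of_nonneg (by positivity)]

/-- The interpolations converge to `f` in `C[0,1]`. -/
lemma interp_tendsto (f : C(I01,ℝ)) :
    Tendsto (fun m : ℕ => interpCM (m+2) (evCM (m+2) f)) atTop (𝓝 f) := by
  rw [Metric.tendsto_atTop]
  intro ε hε
  obtain ⟨K, hK⟩ := unif_small f (ε/2) (by linarith)
  refine ⟨K, fun m hm => ?_⟩
  have herr : dist (interpCM (m+2) (evCM (m+2) f)) f ≤ ε/2 := by
    rw [dist_comm, ContinuousMap.dist_le (by linarith)]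
    intro t
    rw [Real.dist_eq]
    exact cont_err (m+2) (by omega) f (ε/2) (hK (m+2) (by omega)) t
  linarith

/-- For large grids, all the cutoffs of second differences vanish. -/
lemma sumcut_eventually_zero (f : C(I01,ℝ)) (δ : ℝ) (hδ : 0 < δ) :
    ∀ᶠ m : ℕ in atTop, sumcut (m+2) δ (evCM (m+2) f) = 0 := by
  obtain ⟨K, hK⟩ := unif_small f (δ/5) (by linarith)
  rw [eventually_atTop]
  refine ⟨K, fun m hm => ?_⟩
  have hz : ∀ j ∈ (Finset.univ : Finset (Fin (m+2-1))),
      cut δ |secd (m+2) (evCM (m+2) f) j| = 0 := by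
    intro j _
    apply cut_eq_zero hδ
    have e1 := hK (m+2) (by omega) (node (m+2) ⟨j.1+2, by omega⟩) (node (m+2) ⟨j.1+1, by omega⟩)
      (node_dist (m+2) (by omega) _ _ rfl)
    have e2 := hK (m+2) (by omega) (node (m+2) ⟨j.1+1, by omega⟩) (node (m+2) ⟨j.1, by omega⟩)
      (node_dist (m+2) (by omega) _ _ rfl)
    have hsd : secd (m+2) (evCM (m+2) f) j =
        (f (node (m+2) ⟨j.1+2, by omega⟩) - f (node (m+2) ⟨j.1+1, by omega⟩))
        + (f (node (m+2) ⟨j.1, by omega⟩) - f (node (m+2) ⟨j.1+1, by omega⟩)) := by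
      show f (node (m+2) ⟨j.1+2, by omega⟩) - 2 * f (node (m+2) ⟨j.1+1, by omega⟩)
          + f (node (m+2) ⟨j.1, by omega⟩) = _
      ring
    rw [hsd]
    calc |_ + _| ≤ |f (node (m+2) ⟨j.1+2, by omega⟩) - f (node (m+2) ⟨j.1+1, by omega⟩)|
          + |f (node (m+2) ⟨j.1, by omega⟩) - f (node (m+2) ⟨j.1+1, by omega⟩)| := abs_add_le _ _
      _ ≤ δ/5 + δ/5 := by
          refine add_le_add e1 ?_
          rw [abs_sub_comm] at e2
          exact e2
      _ ≤ δ/2 := by linarith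
  unfold sumcut
  rw [Finset.sum_eq_zero hz]
  norm_num

/-- Main step: convergence of integrals for uniformly continuous bounded test functions. -/
lemma main_unif
    (P : ℕ → Measure C(I01, ℝ)) (Q : Measure C(I01, ℝ))
    [∀ n, IsProbabilityMeasure (P n)] [IsProbabilityMeasure Q]
    (hconv : ∀ n, ∀ᵐ f ∂(P n),
      ConvexOn ℝ (Set.Icc (0:ℝ) 1) (Set.IccExtend (zero_le_one : (0:ℝ) ≤ 1) (f : C(I01, ℝ))))
    (hfdd : ∀ (k : ℕ) (t : Fin k → I01) (ψ : BoundedContinuousFunction (Fin k → ℝ) ℝ),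
      Tendsto (fun n => ∫ f, ψ (fun i => f (t i)) ∂(P n)) atTop
        (𝓝 (∫ f, ψ (fun i => f (t i)) ∂Q)))
    (φ : BoundedContinuousFunction C(I01,ℝ) ℝ) (hφu : UniformContinuous ⇑φ) :
    Tendsto (fun n => ∫ f, φ f ∂(P n)) atTop (𝓝 (∫ f, φ f ∂Q)) := by
  rw [Metric.tendsto_atTop]
  intro ε hε
  set M := ‖φ‖ with hMdef
  have hM0 : (0:ℝ) ≤ M := norm_nonneg φ
  set ε₁ : ℝ := ε/8 with hε₁def
  have hε₁p : 0 < ε₁ := by rw [hε₁def]; linarith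
  set η : ℝ := ε/(16*(M+1)) with hηdef
  have hηp : 0 < η := by rw [hηdef]; positivity
  -- uniform continuity modulus for φ
  obtain ⟨δ₀, hδ₀, hub⟩ := Metric.uniformContinuous_iff.mp hφu ε₁ hε₁p
  set δ : ℝ := δ₀/2 with hδdef
  have hδ : 0 < δ := by rw [hδdef]; linarith
  have hφδ : ∀ g1 g2 : C(I01,ℝ), dist g1 g2 ≤ δ → |φ g1 - φ g2| ≤ ε₁ := by
    intro g1 g2 h
    have := hub (lt_of_le_of_lt h (by rw [hδdef]; linarith))
    rw [Real.dist_eq] at this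
    exact this.le
  -- Q-side limits in the grid parameter
  have hQ1 : Tendsto (fun m : ℕ => ∫ f, φ (interpCM (m+2) (evCM (m+2) f)) ∂Q) atTop
      (𝓝 (∫ f, φ f ∂Q)) := by
    apply tendsto_integral_of_dominated_convergence (bound := fun _ => M)
    · intro m
      exact (φ.compContinuous ((interpCM (m+2)).comp (evCM (m+2)))).continuous.aestronglyMeasurable
    · exact integrable_const M
    · intro m
      refine Eventually.of_forall (fun f => ?_)
      rw [Real.norm_eq_abs]
      have := φ.norm_coe_le_norm (interpCM (m+2) (evCM (m+2) f))
      rwa [Real.norm_eq_abs] at this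
    · exact Eventually.of_forall (fun f => (φ.continuous.tendsto f).comp (interp_tendsto f))
  have hQ2 : Tendsto (fun m : ℕ => ∫ f, sumcut (m+2) δ (evCM (m+2) f) ∂Q) atTop
      (𝓝 (0:ℝ)) := by
    have key : Tendsto (fun m : ℕ => ∫ f, sumcut (m+2) δ (evCM (m+2) f) ∂Q) atTop
        (𝓝 (∫ (_ : C(I01,ℝ)), (0:ℝ) ∂Q)) := by
      apply tendsto_integral_of_dominated_convergence (bound := fun _ => 1)
      · intro m
        exact ((cutBCF (m+2) δ hδ).compContinuous (evCM (m+2))).continuous.aestronglyMeasurable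
      · exact integrable_const 1
      · intro m
        refine Eventually.of_forall (fun f => ?_)
        rw [Real.norm_eq_abs, abs_le]
        exact ⟨by linarith [sumcut_nonneg (m+2) δ hδ (evCM (m+2) f)],
          sumcut_le_one (m+2) δ (evCM (m+2) f)⟩
      · refine Eventually.of_forall (fun f => ?_)
        exact tendsto_const_nhds.congr'
          ((sumcut_eventually_zero f δ hδ).mono (fun m hm => hm.symm))
    simpa using key
  -- pick a good grid
  obtain ⟨m₁, hm₁⟩ := (Metric.tendsto_atTop.mp hQ1) ε₁ hε₁p
  obtain ⟨m₂, hm₂⟩ := (Metric.tendsto_atTop.mp hQ2) η hηp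
  set k : ℕ := (max m₁ m₂) + 2 with hkdef
  have hk2 : 2 ≤ k := by omega
  have hQ1' : |(∫ f, φ (interpCM k (evCM k f)) ∂Q) - ∫ f, φ f ∂Q| ≤ ε₁ := by
    have := hm₁ (max m₁ m₂) (le_max_left _ _)
    rw [Real.dist_eq] at this
    exact this.le
  have hQ2' : (∫ f, sumcut k δ (evCM k f) ∂Q) ≤ η := by
    have := hm₂ (max m₁ m₂) (le_max_right _ _)
    rw [Real.dist_eq, sub_zero] at this
    exact (le_abs_self _).trans this.le
  -- fdd applications for the chosen grid
  have hF1 : Tendsto (fun n => ∫ f, φ (interpCM k (evCM k f)) ∂(P n)) atTop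
      (𝓝 (∫ f, φ (interpCM k (evCM k f)) ∂Q)) :=
    hfdd (k+1) (node k) (φ.compContinuous (interpCM k))
  have hF2 : Tendsto (fun n => ∫ f, sumcut k δ (evCM k f) ∂(P n)) atTop
      (𝓝 (∫ f, sumcut k δ (evCM k f) ∂Q)) :=
    hfdd (k+1) (node k) (cutBCF k δ hδ)
  obtain ⟨N₁, hN₁⟩ := (Metric.tendsto_atTop.mp hF1) ε₁ hε₁p
  obtain ⟨N₂, hN₂⟩ := (Metric.tendsto_atTop.mp hF2) η hηp
  refine ⟨max N₁ N₂, fun n hn => ?_⟩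
  -- integrability
  have hint1 : Integrable (fun f => φ f) (P n) := φ.integrable _
  have hint2 : Integrable (fun f => φ (interpCM k (evCM k f))) (P n) :=
    (φ.compContinuous ((interpCM k).comp (evCM k))).integrable _
  have hint3 : Integrable (fun f => sumcut k δ (evCM k f)) (P n) :=
    ((cutBCF k δ hδ).compContinuous (evCM k)).integrable _
  -- a.e. pointwise bound under P n
  have hbound : |(∫ f, φ f ∂(P n)) - ∫ f, φ (interpCM k (evCM k f)) ∂(P n)|
      ≤ ε₁ + 2*M*(∫ f, sumcut k δ (evCM k f) ∂(P n)) := by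
    rw [← integral_sub hint1 hint2]
    calc |∫ f, (φ f - φ (interpCM k (evCM k f))) ∂(P n)|
        ≤ ∫ f, |φ f - φ (interpCM k (evCM k f))| ∂(P n) := by
          have := norm_integral_le_integral_norm (μ := P n)
            (f := fun f => φ f - φ (interpCM k (evCM k f)))
          simpa [Real.norm_eq_abs] using this
      _ ≤ ∫ f, (ε₁ + 2*M*sumcut k δ (evCM k f)) ∂(P n) := by
          apply integral_mono_ae (hint1.sub hint2).abs
            ((integrable_const ε₁).add (hint3.const_mul (2*M)))
          exact (hconv n).mono (fun f hf =>
            key_pointwise k hk2 δ ε₁ hδ hε₁p.le φ hφδ f hf)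
      _ = ε₁ + 2*M*(∫ f, sumcut k δ (evCM k f) ∂(P n)) := by
          rw [integral_add (integrable_const ε₁) (hint3.const_mul (2*M)),
            integral_const, integral_const_mul]
          simp
  have t1 : |(∫ f, φ (interpCM k (evCM k f)) ∂(P n))
      - ∫ f, φ (interpCM k (evCM k f)) ∂Q| ≤ ε₁ := by
    have := hN₁ n (le_trans (le_max_left _ _) hn)
    rw [Real.dist_eq] at this
    exact this.le
  have t2 : (∫ f, sumcut k δ (evCM k f) ∂(P n)) ≤ 2*η := by
    have := hN₂ n (le_trans (le_max_right _ _) hn)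
    rw [Real.dist_eq] at this
    have := (le_abs_self _).trans this.le
    linarith [hQ2']
  have hsnn : 0 ≤ ∫ f, sumcut k δ (evCM k f) ∂(P n) :=
    integral_nonneg (fun f => sumcut_nonneg k δ hδ _)
  rw [Real.dist_eq]
  have hMη : 2*M*(2*η) ≤ ε/4 := by
    rw [hηdef]
    have h1 : 2*M*(2*(ε/(16*(M+1)))) = (M/(M+1)) * (ε/4) := by field_simp; ring
    rw [h1]
    have h2 : M/(M+1) ≤ 1 := by rw [div_le_one (by linarith)]; linarith
    nlinarith [mul_nonneg (by linarith : (0:ℝ) ≤ 1 - M/(M+1)) (by linarith : (0:ℝ) ≤ ε/4)]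
  calc |(∫ f, φ f ∂(P n)) - ∫ f, φ f ∂Q|
      ≤ |(∫ f, φ f ∂(P n)) - ∫ f, φ (interpCM k (evCM k f)) ∂(P n)|
        + |(∫ f, φ (interpCM k (evCM k f)) ∂(P n)) - ∫ f, φ (interpCM k (evCM k f)) ∂Q|
        + |(∫ f, φ (interpCM k (evCM k f)) ∂Q) - ∫ f, φ f ∂Q| := by
          have := abs_sub_le ((∫ f, φ f ∂(P n))) (∫ f, φ (interpCM k (evCM k f)) ∂(P n))
            (∫ f, φ f ∂Q)
          have h2 := abs_sub_le ((∫ f, φ (interpCM k (evCM k f)) ∂(P n)))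
            (∫ f, φ (interpCM k (evCM k f)) ∂Q) (∫ f, φ f ∂Q)
          linarith
    _ ≤ (ε₁ + 2*M*(2*η)) + ε₁ + ε₁ := by
          have hb2 : 2*M*(∫ f, sumcut k δ (evCM k f) ∂(P n)) ≤ 2*M*(2*η) :=
            mul_le_mul_of_nonneg_left t2 (by linarith)
          linarith [hbound, t1, hQ1']
    _ < ε := by
          rw [hε₁def]
          linarith [hMη]

section MoreauYosida

variable {X : Type*} [MetricSpace X] [Nonempty X]

/-- Moreau–Yosida / Lipschitz regularization of a bounded continuous function. -/
def myos (f : BoundedContinuousFunction X ℝ) (m : ℕ) (x : X) : ℝ :=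
  ⨅ y, (f y + m * dist x y)

lemma myos_bddBelow (f : BoundedContinuousFunction X ℝ) (m : ℕ) (x : X) :
    BddBelow (Set.range (fun y => f y + (m:ℝ) * dist x y)) := by
  refine ⟨-‖f‖, ?_⟩
  rintro _ ⟨y, rfl⟩
  have h1 : |f y| ≤ ‖f‖ := by
    have := f.norm_coe_le_norm y; rwa [Real.norm_eq_abs] at this
  have h2 : (0:ℝ) ≤ (m:ℝ) * dist x y := by positivity
  have := (abs_le.mp h1).1
  simp only [Set.mem_setOf_eq]
  linarith

lemma myos_le (f : BoundedContinuousFunction X ℝ) (m : ℕ) (x : X) :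
    myos f m x ≤ f x := by
  have := ciInf_le (myos_bddBelow f m x) x
  simpa [myos] using this

lemma neg_norm_le_myos (f : BoundedContinuousFunction X ℝ) (m : ℕ) (x : X) :
    -‖f‖ ≤ myos f m x := by
  apply le_ciInf
  intro y
  have h1 : |f y| ≤ ‖f‖ := by
    have := f.norm_coe_le_norm y; rwa [Real.norm_eq_abs] at this
  have h2 : (0:ℝ) ≤ (m:ℝ) * dist x y := by positivity
  linarith [(abs_le.mp h1).1]

lemma myos_abs_le (f : BoundedContinuousFunction X ℝ) (m : ℕ) (x : X) :
    |myos f m x| ≤ ‖f‖ := by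
  rw [abs_le]
  refine ⟨neg_norm_le_myos f m x, (myos_le f m x).trans ((le_abs_self _).trans ?_)⟩
  have := f.norm_coe_le_norm x; rwa [Real.norm_eq_abs] at this

lemma myos_lip (f : BoundedContinuousFunction X ℝ) (m : ℕ) (x x' : X) :
    myos f m x ≤ myos f m x' + m * dist x x' := by
  rw [← sub_le_iff_le_add]
  apply le_ciInf
  intro y
  have h1 : myos f m x ≤ f y + m * dist x y := ciInf_le (myos_bddBelow f m x) y
  have h2 : dist x y ≤ dist x x' + dist x' y := dist_triangle x x' y
  have h3 : (m:ℝ) * dist x y ≤ (m:ℝ) * (dist x x' + dist x' y) :=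
    mul_le_mul_of_nonneg_left h2 (by positivity)
  linarith

lemma myos_dist_le (f : BoundedContinuousFunction X ℝ) (m : ℕ) (x x' : X) :
    |myos f m x - myos f m x'| ≤ m * dist x x' := by
  rw [abs_le]
  constructor
  · have := myos_lip f m x' x
    rw [dist_comm] at this
    linarith
  · linarith [myos_lip f m x x']

lemma myos_uniformContinuous (f : BoundedContinuousFunction X ℝ) (m : ℕ) :
    UniformContinuous (myos f m) := by
  rw [Metric.uniformContinuous_iff]
  intro ε hε
  refine ⟨ε/(m+1), by positivity, fun {a b} hab => ?_⟩
  rw [Real.dist_eq]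
  calc |myos f m a - myos f m b| ≤ m * dist a b := myos_dist_le f m a b
    _ < ε := by
        have hm1 : (0:ℝ) < (m:ℝ)+1 := by positivity
        have h1 : (m:ℝ) * dist a b ≤ (m:ℝ) * (ε/(m+1)) :=
          mul_le_mul_of_nonneg_left hab.le (by positivity)
        have h2 : (m:ℝ) * (ε/(m+1)) < ε := by
          have he : (m:ℝ) * (ε/(m+1)) = ε * ((m:ℝ)/(m+1)) := by ring
          have hlt : (m:ℝ)/(m+1) < 1 := by
            rw [div_lt_one hm1]; linarith
          nlinarith [hε]
        linarith

/-- The Moreau–Yosida regularization, as a bounded continuous function. -/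
def myosBCF (f : BoundedContinuousFunction X ℝ) (m : ℕ) : BoundedContinuousFunction X ℝ :=
  BoundedContinuousFunction.mkOfBound
    ⟨myos f m, (myos_uniformContinuous f m).continuous⟩ (2*‖f‖) (by
      intro x y
      rw [Real.dist_eq]
      have h1 := myos_abs_le f m x
      have h2 := myos_abs_le f m y
      simp only [ContinuousMap.coe_mk]
      rw [abs_le]
      constructor <;> linarith [(abs_le.mp h1).1, (abs_le.mp h1).2,
        (abs_le.mp h2).1, (abs_le.mp h2).2])

lemma myosBCF_apply (f : BoundedContinuousFunction X ℝ) (m : ℕ) (x : X) :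
    myosBCF f m x = myos f m x := rfl

/-- The regularizations converge pointwise to `f`. -/
lemma myos_tendsto (f : BoundedContinuousFunction X ℝ) (x : X) :
    Tendsto (fun m : ℕ => myos f m x) atTop (𝓝 (f x)) := by
  rw [Metric.tendsto_atTop]
  intro ε hε
  obtain ⟨δ, hδ, hball⟩ := Metric.continuousAt_iff.mp (f.continuous.continuousAt (x := x)) (ε/2)
    (by linarith)
  set M : ℕ := ⌈(2*‖f‖ + 1)/δ⌉₊ with hMdef
  refine ⟨M, fun m hm => ?_⟩
  have hfn : (0:ℝ) ≤ ‖f‖ := norm_nonneg f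
  have hlow : f x - ε/2 ≤ myos f m x := by
    apply le_ciInf
    intro y
    rcases lt_or_ge (dist x y) δ with h | h
    · have hb := hball (show dist y x < δ by rwa [dist_comm])
      rw [Real.dist_eq] at hb
      have h2 : (0:ℝ) ≤ (m:ℝ) * dist x y := by positivity
      linarith [(abs_le.mp hb.le).1]
    · have hm' : (M:ℝ) ≤ m := by exact_mod_cast hm
      have hc : (2*‖f‖+1)/δ ≤ (M:ℝ) := Nat.le_ceil _
      have hc2 : 2*‖f‖+1 ≤ (M:ℝ)*δ := by rwa [div_le_iff₀ hδ] at hc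
      have h3 : (M:ℝ)*δ ≤ (m:ℝ)*δ := mul_le_mul_of_nonneg_right hm' hδ.le
      have h4 : (m:ℝ)*δ ≤ (m:ℝ)*dist x y := mul_le_mul_of_nonneg_left h (by positivity)
      have h5 : -‖f‖ ≤ f y := by
        have := f.norm_coe_le_norm y; rw [Real.norm_eq_abs] at this
        linarith [(abs_le.mp this).1]
      have h6 : f x ≤ ‖f‖ := by
        have := f.norm_coe_le_norm x; rw [Real.norm_eq_abs] at this
        linarith [(abs_le.mp this).2]
      linarith
  have hup : myos f m x ≤ f x := myos_le f m x
  rw [Real.dist_eq]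
  have : |myos f m x - f x| ≤ ε/2 := abs_le.mpr ⟨by linarith, by linarith⟩
  linarith

end MoreauYosida

/-- Every integral against `Q` of a bounded continuous function is at most the liminf of the
corresponding integrals against `P n`. -/
lemma integral_le_liminf
    (P : ℕ → Measure C(I01, ℝ)) (Q : Measure C(I01, ℝ))
    [∀ n, IsProbabilityMeasure (P n)] [IsProbabilityMeasure Q]
    (hconv : ∀ n, ∀ᵐ f ∂(P n),
      ConvexOn ℝ (Set.Icc (0:ℝ) 1) (Set.IccExtend (zero_le_one : (0:ℝ) ≤ 1) (f : C(I01, ℝ))))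
    (hfdd : ∀ (k : ℕ) (t : Fin k → I01) (ψ : BoundedContinuousFunction (Fin k → ℝ) ℝ),
      Tendsto (fun n => ∫ f, ψ (fun i => f (t i)) ∂(P n)) atTop
        (𝓝 (∫ f, ψ (fun i => f (t i)) ∂Q)))
    (g : BoundedContinuousFunction C(I01,ℝ) ℝ) :
    (∫ f, g f ∂Q) ≤ atTop.liminf (fun n => ∫ f, g f ∂(P n)) := by
  set L := atTop.liminf (fun n => ∫ f, g f ∂(P n)) with hL
  -- each regularization's integral is below the liminf
  have key : ∀ m : ℕ, (∫ f, myosBCF g m f ∂Q) ≤ L := by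
    intro m
    have htd : Tendsto (fun n => ∫ f, myosBCF g m f ∂(P n)) atTop
        (𝓝 (∫ f, myosBCF g m f ∂Q)) :=
      main_unif P Q hconv hfdd (myosBCF g m) (myos_uniformContinuous g m)
    have hmono : ∀ n, (∫ f, myosBCF g m f ∂(P n)) ≤ ∫ f, g f ∂(P n) := fun n =>
      integral_mono ((myosBCF g m).integrable _) (g.integrable _) (fun f => myos_le g m f)
    have hliminf_le : atTop.liminf (fun n => ∫ f, myosBCF g m f ∂(P n)) ≤ L := by
      refine liminf_le_liminf (Eventually.of_forall hmono) ?_ ?_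
      · refine isBoundedUnder_of ⟨-‖myosBCF g m‖, fun n => ?_⟩
        have := (myosBCF g m).norm_integral_le_norm (P n)
        rw [Real.norm_eq_abs] at this
        simp only [ge_iff_le]
        linarith [(abs_le.mp this).1]
      · apply IsBoundedUnder.isCoboundedUnder_ge
        refine isBoundedUnder_of ⟨‖g‖, fun n => ?_⟩
        have := g.norm_integral_le_norm (P n)
        rw [Real.norm_eq_abs] at this
        linarith [(abs_le.mp this).2]
    rw [← htd.liminf_eq]
    exact hliminf_le
  -- the integrals of the regularizations converge to that of g
  have hQ : Tendsto (fun m : ℕ => ∫ f, myosBCF g m f ∂Q) atTop (𝓝 (∫ f, g f ∂Q)) := by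
    apply tendsto_integral_of_dominated_convergence (bound := fun _ => ‖g‖)
    · intro m
      exact (myosBCF g m).continuous.aestronglyMeasurable
    · exact integrable_const _
    · intro m
      refine Eventually.of_forall (fun f => ?_)
      rw [Real.norm_eq_abs]
      exact myos_abs_le g m f
    · exact Eventually.of_forall (fun f => myos_tendsto g f)
  exact le_of_tendsto hQ (Eventually.of_forall key)

end

end ConvexWeak

/-- let `P_n`, `P` be Borel probability measures on `C[0,1]` such that for
every `n`, `P_n`-almost every `f` is convex on `[0,1]`. If all finite-dimensional
distributions of `P_n` converge weakly to those of `P`, then `P_n` converges weakly to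
`P` (i.e. the integrals of every bounded continuous function converge). -/
theorem convex_random_functions_weak_convergence
    (P : ℕ → Measure C(Set.Icc (0 : ℝ) 1, ℝ))
    (Q : Measure C(Set.Icc (0 : ℝ) 1, ℝ))
    [∀ n, IsProbabilityMeasure (P n)] [IsProbabilityMeasure Q]
    (hconv : ∀ n, ∀ᵐ f ∂(P n),
      ConvexOn ℝ (Set.Icc (0 : ℝ) 1) (Set.IccExtend (zero_le_one : (0:ℝ) ≤ 1) (f : C(Set.Icc (0 : ℝ) 1, ℝ))))
    (hfdd : ∀ (k : ℕ) (t : Fin k → Set.Icc (0 : ℝ) 1)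
        (ψ : BoundedContinuousFunction (Fin k → ℝ) ℝ),
      Tendsto (fun n => ∫ f, ψ (fun i => f (t i)) ∂(P n)) atTop
        (nhds (∫ f, ψ (fun i => f (t i)) ∂Q))) :
    ∀ φ : BoundedContinuousFunction C(Set.Icc (0 : ℝ) 1, ℝ) ℝ,
      Tendsto (fun n => ∫ f, φ f ∂(P n)) atTop (nhds (∫ f, φ f ∂Q)) := by
  intro φ
  apply BoundedContinuousFunction.tendsto_integral_of_forall_integral_le_liminf_integral
  intro g _
  exact ConvexWeak.integral_le_liminf P Q hconv hfdd g
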